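/- Let n ≥ 1 and let q ∈ ℂ be nonzero and not a root of unity. Then the group of graded ℂ-algebra automorphisms of 𝔥_n(q) (those automorphisms φ with φ(V) = V) is isomorphic as a group to the semidirect product ((Fin n → ℂˣ) × (Fin n → ℂˣ)) ⋊ Equiv.Perm (Fin n), where a permutation acts on a pair of tuples by permuting the coordinates of both tuples simultaneously. -/

import Mathlib

noncomputable section

open scoped BigOperators

namespace QHeisenberg

/-- Index type for the `3n` generators: `x`-, `y`-, and `z`-variables. -/
abbrev GenIdx (n : ℕ) := Fin n ⊕ (Fin n ⊕ Fin n)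

/-- The `x_i` generator in the free algebra. -/
def fX (n : ℕ) (i : Fin n) : FreeAlgebra ℂ (GenIdx n) := FreeAlgebra.ι ℂ (Sum.inl i)

/-- The `y_i` generator in the free algebra. -/
def fY (n : ℕ) (i : Fin n) : FreeAlgebra ℂ (GenIdx n) := FreeAlgebra.ι ℂ (Sum.inr (Sum.inl i))

/-- The `z_i` generator in the free algebra. -/
def fZ (n : ℕ) (i : Fin n) : FreeAlgebra ℂ (GenIdx n) := FreeAlgebra.ι ℂ (Sum.inr (Sum.inr i))

/-- The defining relations of the q-Heisenberg algebra `𝔥_n(q)`. -/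
inductive Rel (n : ℕ) (q : ℂ) :
    FreeAlgebra ℂ (GenIdx n) → FreeAlgebra ℂ (GenIdx n) → Prop
  | xx (i j : Fin n) : Rel n q (fX n i * fX n j) (fX n j * fX n i)
  | yy (i j : Fin n) : Rel n q (fY n i * fY n j) (fY n j * fY n i)
  | zz (i j : Fin n) : Rel n q (fZ n i * fZ n j) (fZ n j * fZ n i)
  | xz (i : Fin n) : Rel n q (fX n i * fZ n i) (q • (fZ n i * fX n i))
  | yz (i : Fin n) : Rel n q (fY n i * fZ n i) (q⁻¹ • (fZ n i * fY n i))
  | xy (i : Fin n) : Rel n q (fX n i * fY n i) (q⁻¹ • (fY n i * fX n i) + fZ n i)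
  | xyne (i j : Fin n) : i ≠ j → Rel n q (fX n i * fY n j) (fY n j * fX n i)
  | xzne (i j : Fin n) : i ≠ j → Rel n q (fX n i * fZ n j) (fZ n j * fX n i)
  | yzne (i j : Fin n) : i ≠ j → Rel n q (fY n i * fZ n j) (fZ n j * fY n i)

/-- The q-Heisenberg algebra `𝔥_n(q)`. -/
abbrev H (n : ℕ) (q : ℂ) := RingQuot (Rel n q)

/-- The generator `x_i` of `𝔥_n(q)`. -/
def X (n : ℕ) (q : ℂ) (i : Fin n) : H n q := RingQuot.mkAlgHom ℂ (Rel n q) (fX n i)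

/-- The generator `y_i` of `𝔥_n(q)`. -/
def Y (n : ℕ) (q : ℂ) (i : Fin n) : H n q := RingQuot.mkAlgHom ℂ (Rel n q) (fY n i)

/-- The generator `z_i` of `𝔥_n(q)`. -/
def Z (n : ℕ) (q : ℂ) (i : Fin n) : H n q := RingQuot.mkAlgHom ℂ (Rel n q) (fZ n i)

/-- `q` is not a root of unity: `q ^ k ≠ 1` for every `k ≥ 1`. -/
def NotRootOfUnity (q : ℂ) : Prop := ∀ k : ℕ, 1 ≤ k → q ^ k ≠ 1

end QHeisenberg

namespace QHeisenberg

/-- The `ℂ`-linear span `V` of the `3n` generators `x_i, y_i, z_i` of `𝔥_n(q)`. -/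
def genSpan (n : ℕ) (q : ℂ) : Submodule ℂ (H n q) :=
  Submodule.span ℂ (Set.range (X n q) ∪ Set.range (Y n q) ∪ Set.range (Z n q))

/-- The group of graded `ℂ`-algebra automorphisms of `𝔥_n(q)`: those `φ` with
`φ(V) = V`. -/
def gradedAut (n : ℕ) (q : ℂ) : Subgroup (H n q ≃ₐ[ℂ] H n q) where
  carrier := { φ | Submodule.map φ.toLinearMap (genSpan n q) = genSpan n q }
  one_mem' := by
    show Submodule.map (1 : H n q ≃ₐ[ℂ] H n q).toLinearMap (genSpan n q) = genSpan n q
    have h : (1 : H n q ≃ₐ[ℂ] H n q).toLinearMap = LinearMap.id := LinearMap.ext fun x => rfl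
    rw [h, Submodule.map_id]
  mul_mem' := by
    intro a b ha hb
    show Submodule.map (a * b).toLinearMap (genSpan n q) = genSpan n q
    have h : (a * b).toLinearMap = a.toLinearMap.comp b.toLinearMap :=
      LinearMap.ext fun x => rfl
    rw [h, Submodule.map_comp]
    rw [show Submodule.map b.toLinearMap (genSpan n q) = genSpan n q from hb]
    exact ha
  inv_mem' := by
    intro a ha
    show Submodule.map a⁻¹.toLinearMap (genSpan n q) = genSpan n q
    conv_lhs => rw [← show Submodule.map a.toLinearMap (genSpan n q) = genSpan n q from ha]
    rw [← Submodule.map_comp]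
    have h : (a⁻¹.toLinearMap).comp a.toLinearMap = LinearMap.id :=
      LinearMap.ext fun x => a.symm_apply_apply x
    rw [h, Submodule.map_id]

/-- The action of `Equiv.Perm (Fin n)` on pairs of tuples of units, permuting the
coordinates of both tuples simultaneously. -/
def permAction (n : ℕ) : Equiv.Perm (Fin n) →* MulAut ((Fin n → ℂˣ) × (Fin n → ℂˣ)) where
  toFun π :=
    { toFun := fun p => (p.1 ∘ π.symm, p.2 ∘ π.symm)
      invFun := fun p => (p.1 ∘ π, p.2 ∘ π)
      left_inv := by intro p; ext i <;> simp
      right_inv := by intro p; ext i <;> simp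
      map_mul' := by intro p r; ext i <;> simp }
  map_one' := by
    ext p i <;> simp <;> rfl
  map_mul' := by
    intro π σ
    ext p i <;> simp [Equiv.Perm.mul_def]

section Rep

variable {n : ℕ} {q : ℂ}

/-- Combined generator family in `H n q`. -/
def gen (n : ℕ) (q : ℂ) : GenIdx n → H n q := Sum.elim (X n q) (Sum.elim (Y n q) (Z n q))

lemma hrel {a b : FreeAlgebra ℂ (GenIdx n)} (h : Rel n q a b) :
    RingQuot.mkAlgHom ℂ (Rel n q) a = RingQuot.mkAlgHom ℂ (Rel n q) b :=
  RingQuot.mkAlgHom_rel ℂ h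

lemma HXZ (i : Fin n) : X n q i * Z n q i = q • (Z n q i * X n q i) := by
  simpa only [map_mul, map_smul, X, Z] using hrel (Rel.xz (n := n) (q := q) i)

lemma HYZ (i : Fin n) : Y n q i * Z n q i = q⁻¹ • (Z n q i * Y n q i) := by
  simpa only [map_mul, map_smul, Y, Z] using hrel (Rel.yz (n := n) (q := q) i)

lemma HXY (i : Fin n) : X n q i * Y n q i = q⁻¹ • (Y n q i * X n q i) + Z n q i := by
  simpa only [map_mul, map_smul, map_add, X, Y, Z] using hrel (Rel.xy (n := n) (q := q) i)

lemma HXYne {i j : Fin n} (h : i ≠ j) : X n q i * Y n q j = Y n q j * X n q i := by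
  simpa only [map_mul, X, Y] using hrel (Rel.xyne (n := n) (q := q) i j h)

lemma HXZne {i j : Fin n} (h : i ≠ j) : X n q i * Z n q j = Z n q j * X n q i := by
  simpa only [map_mul, X, Z] using hrel (Rel.xzne (n := n) (q := q) i j h)

lemma HYZne {i j : Fin n} (h : i ≠ j) : Y n q i * Z n q j = Z n q j * Y n q i := by
  simpa only [map_mul, Y, Z] using hrel (Rel.yzne (n := n) (q := q) i j h)

lemma HXX (i j : Fin n) : X n q i * X n q j = X n q j * X n q i := by
  simpa only [map_mul, X] using hrel (Rel.xx (n := n) (q := q) i j)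

lemma HYY (i j : Fin n) : Y n q i * Y n q j = Y n q j * Y n q i := by
  simpa only [map_mul, Y] using hrel (Rel.yy (n := n) (q := q) i j)

lemma HZZ (i j : Fin n) : Z n q i * Z n q j = Z n q j * Z n q i := by
  simpa only [map_mul, Z] using hrel (Rel.zz (n := n) (q := q) i j)

/-- The underlying space of the defining representation. -/
abbrev P (n : ℕ) := (Fin n → ℕ) →₀ ℂ

def upi (μ : Fin n → ℕ) (i : Fin n) : Fin n → ℕ := Function.update μ i (μ i + 1)
def dni (μ : Fin n → ℕ) (i : Fin n) : Fin n → ℕ := Function.update μ i (μ i - 1)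

@[simp] lemma upi_at (μ : Fin n → ℕ) (i : Fin n) : upi μ i i = μ i + 1 := by
  simp [upi]
@[simp] lemma dni_at (μ : Fin n → ℕ) (i : Fin n) : dni μ i i = μ i - 1 := by
  simp [dni]
lemma upi_ne {i j : Fin n} (μ : Fin n → ℕ) (h : j ≠ i) : upi μ i j = μ j := by
  simp [upi, Function.update_of_ne h]
lemma dni_ne {i j : Fin n} (μ : Fin n → ℕ) (h : j ≠ i) : dni μ i j = μ j := by
  simp [dni, Function.update_of_ne h]

lemma upi_dni_comm {i j : Fin n} (μ : Fin n → ℕ) (h : i ≠ j) :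
    upi (dni μ j) i = dni (upi μ i) j := by
  unfold upi dni
  simp only [Function.update_of_ne h, Function.update_of_ne h.symm]
  exact Function.update_comm h.symm _ _ μ

lemma upi_upi_comm {i j : Fin n} (μ : Fin n → ℕ) (h : i ≠ j) :
    upi (upi μ j) i = upi (upi μ i) j := by
  unfold upi
  simp only [Function.update_of_ne h, Function.update_of_ne h.symm]
  exact Function.update_comm h.symm _ _ μ

lemma dni_dni_comm {i j : Fin n} (μ : Fin n → ℕ) (h : i ≠ j) :
    dni (dni μ j) i = dni (dni μ i) j := by
  unfold dni
  simp only [Function.update_of_ne h, Function.update_of_ne h.symm]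
  exact Function.update_comm h.symm _ _ μ

/-- The coefficient in the action of `y_i`. -/
def cc (q : ℂ) (k : ℕ) : ℂ := (q⁻¹ ^ k - q ^ k) * (1 - q⁻¹ ^ 2)⁻¹

@[simp] lemma cc_zero : cc q 0 = 0 := by simp [cc]

def oX (n : ℕ) (i : Fin n) : P n →ₗ[ℂ] P n :=
  Finsupp.lift (P n) ℂ (Fin n → ℕ) fun μ => Finsupp.single (upi μ i) 1
def oY (n : ℕ) (q : ℂ) (i : Fin n) : P n →ₗ[ℂ] P n :=
  Finsupp.lift (P n) ℂ (Fin n → ℕ) fun μ => Finsupp.single (dni μ i) (cc q (μ i))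
def oZ (n : ℕ) (q : ℂ) (i : Fin n) : P n →ₗ[ℂ] P n :=
  Finsupp.lift (P n) ℂ (Fin n → ℕ) fun μ => Finsupp.single μ (q⁻¹ ^ (μ i))

lemma lift_single (f : (Fin n → ℕ) → P n) (μ : Fin n → ℕ) (r : ℂ) :
    Finsupp.lift (P n) ℂ (Fin n → ℕ) f (Finsupp.single μ r) = r • f μ := by
  rw [Finsupp.lift_apply, Finsupp.sum_single_index (by simp)]

@[simp] lemma oX_single (i : Fin n) (μ : Fin n → ℕ) (r : ℂ) :
    oX n i (Finsupp.single μ r) = Finsupp.single (upi μ i) r := by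
  rw [oX, lift_single, Finsupp.smul_single', mul_one]

@[simp] lemma oY_single (i : Fin n) (μ : Fin n → ℕ) (r : ℂ) :
    oY n q i (Finsupp.single μ r) = Finsupp.single (dni μ i) (r * cc q (μ i)) := by
  rw [oY, lift_single, Finsupp.smul_single']

@[simp] lemma oZ_single (i : Fin n) (μ : Fin n → ℕ) (r : ℂ) :
    oZ n q i (Finsupp.single μ r) = Finsupp.single μ (r * q⁻¹ ^ (μ i)) := by
  rw [oZ, lift_single, Finsupp.smul_single']

def genOp (n : ℕ) (q : ℂ) : GenIdx n → Module.End ℂ (P n) :=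
  Sum.elim (oX n) (Sum.elim (oY n q) (oZ n q))

def fRep (n : ℕ) (q : ℂ) : FreeAlgebra ℂ (GenIdx n) →ₐ[ℂ] Module.End ℂ (P n) :=
  FreeAlgebra.lift ℂ (genOp n q)

end Rep
section Rep2

variable {n : ℕ} {q : ℂ}

lemma dni_upi (μ : Fin n → ℕ) (i : Fin n) : dni (upi μ i) i = μ := by
  unfold upi dni
  simp [Function.update_idem]

lemma upi_dni (μ : Fin n → ℕ) (i : Fin n) (h : 1 ≤ μ i) : upi (dni μ i) i = μ := by
  unfold upi dni
  rw [Function.update_self, Function.update_idem]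
  have : μ i - 1 + 1 = μ i := by omega
  rw [this, Function.update_eq_self]

lemma one_sub_inv_sq_ne (hq : q ≠ 0) (h2 : q ^ 2 ≠ 1) : (1 : ℂ) - q⁻¹ ^ 2 ≠ 0 := by
  intro h
  apply h2
  have h1 : q⁻¹ ^ 2 = 1 := by linear_combination -h
  have h3 : q ^ 2 * q⁻¹ ^ 2 = 1 := by
    rw [← mul_pow, mul_inv_cancel₀ hq]; norm_num
  rw [h1, mul_one] at h3
  exact h3

lemma cc_rec (hq : q ≠ 0) (h2 : q ^ 2 ≠ 1) (k : ℕ) :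
    cc q k = q⁻¹ * cc q (k + 1) + q⁻¹ ^ k := by
  have hd := one_sub_inv_sq_ne hq h2
  have hpq : q⁻¹ * q = 1 := inv_mul_cancel₀ hq
  have hDt : (1 - q⁻¹ ^ 2)⁻¹ * (1 - q⁻¹ ^ 2) = 1 := inv_mul_cancel₀ hd
  unfold cc
  linear_combination (q⁻¹ ^ k) * hDt + ((1 - q⁻¹ ^ 2)⁻¹ * q ^ k) * hpq

lemma fRep_rel (hq : q ≠ 0) (h2 : q ^ 2 ≠ 1) {a b : FreeAlgebra ℂ (GenIdx n)}
    (h : Rel n q a b) : fRep n q a = fRep n q b := by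
  induction h with
  | xx i j =>
    rcases eq_or_ne i j with rfl | hij
    · rfl
    · refine Finsupp.lhom_ext fun μ r => ?_
      simp only [map_mul, Module.End.mul_apply, fRep, fX, FreeAlgebra.lift_ι_apply, genOp,
        Sum.elim_inl, oX_single]
      rw [upi_upi_comm μ hij]
  | yy i j =>
    rcases eq_or_ne i j with rfl | hij
    · rfl
    · refine Finsupp.lhom_ext fun μ r => ?_
      simp only [map_mul, Module.End.mul_apply, fRep, fY, FreeAlgebra.lift_ι_apply, genOp,
        Sum.elim_inr, Sum.elim_inl, oY_single]
      rw [dni_dni_comm μ hij, dni_ne μ hij, dni_ne μ hij.symm]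
      congr 1
      ring
  | zz i j =>
    refine Finsupp.lhom_ext fun μ r => ?_
    simp only [map_mul, Module.End.mul_apply, fRep, fZ, FreeAlgebra.lift_ι_apply, genOp,
      Sum.elim_inr, oZ_single]
    congr 1
    ring
  | xz i =>
    refine Finsupp.lhom_ext fun μ r => ?_
    simp only [map_mul, map_smul, Module.End.mul_apply, LinearMap.smul_apply, fRep, fX, fZ,
      FreeAlgebra.lift_ι_apply, genOp, Sum.elim_inl, Sum.elim_inr, oX_single, oZ_single,
      Finsupp.smul_single', upi_at]
    congr 1
    linear_combination (-(r * q⁻¹ ^ μ i)) * (mul_inv_cancel₀ hq)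
  | yz i =>
    refine Finsupp.lhom_ext fun μ r => ?_
    simp only [map_mul, map_smul, Module.End.mul_apply, LinearMap.smul_apply, fRep, fY, fZ,
      FreeAlgebra.lift_ι_apply, genOp, Sum.elim_inl, Sum.elim_inr, oY_single, oZ_single,
      Finsupp.smul_single', dni_at]
    congr 1
    cases hk : μ i with
    | zero => simp
    | succ k =>
      simp only [Nat.succ_sub_one]
      rw [pow_succ]
      ring
  | xy i =>
    refine Finsupp.lhom_ext fun μ r => ?_
    simp only [map_mul, map_smul, map_add, Module.End.mul_apply, LinearMap.smul_apply,
      LinearMap.add_apply, fRep, fX, fY, fZ, FreeAlgebra.lift_ι_apply, genOp, Sum.elim_inl,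
      Sum.elim_inr, oX_single, oY_single, oZ_single, Finsupp.smul_single', dni_upi, upi_at]
    cases hk : μ i with
    | zero =>
      rw [cc_zero, mul_zero, Finsupp.single_zero]
      symm
      rw [← Finsupp.single_add, Finsupp.single_eq_zero]
      have h0 := cc_rec hq h2 0
      rw [cc_zero] at h0
      linear_combination (-r) * h0
    | succ k =>
      rw [upi_dni μ i (by omega), ← Finsupp.single_add]
      congr 1
      have hr := cc_rec hq h2 (μ i)
      rw [hk] at hr
      linear_combination r * hr
  | xyne i j hij =>
    refine Finsupp.lhom_ext fun μ r => ?_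
    simp only [map_mul, Module.End.mul_apply, fRep, fX, fY, FreeAlgebra.lift_ι_apply, genOp,
      Sum.elim_inl, Sum.elim_inr, oX_single, oY_single]
    rw [upi_dni_comm μ hij, upi_ne μ hij.symm]
  | xzne i j hij =>
    refine Finsupp.lhom_ext fun μ r => ?_
    simp only [map_mul, Module.End.mul_apply, fRep, fX, fZ, FreeAlgebra.lift_ι_apply, genOp,
      Sum.elim_inl, Sum.elim_inr, oX_single, oZ_single]
    rw [upi_ne μ hij.symm]
  | yzne i j hij =>
    refine Finsupp.lhom_ext fun μ r => ?_
    simp only [map_mul, Module.End.mul_apply, fRep, fY, fZ, FreeAlgebra.lift_ι_apply, genOp,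
      Sum.elim_inl, Sum.elim_inr, oY_single, oZ_single]
    rw [dni_ne μ hij.symm]
    congr 1
    ring

end Rep2
section Coord

variable {n : ℕ} {q : ℂ}

def rep (n : ℕ) (q : ℂ) (hq : q ≠ 0) (hq' : NotRootOfUnity q) :
    H n q →ₐ[ℂ] Module.End ℂ (P n) :=
  RingQuot.liftAlgHom ℂ ⟨fRep n q, fun _ _ h => fRep_rel hq (hq' 2 (by norm_num)) h⟩

variable (hq : q ≠ 0) (hq' : NotRootOfUnity q)

@[simp] lemma rep_X (i : Fin n) : rep n q hq hq' (X n q i) = oX n i := by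
  rw [X, rep, RingQuot.liftAlgHom_mkAlgHom_apply]
  simp [fRep, fX, genOp]

@[simp] lemma rep_Y (i : Fin n) : rep n q hq hq' (Y n q i) = oY n q i := by
  rw [Y, rep, RingQuot.liftAlgHom_mkAlgHom_apply]
  simp [fRep, fY, genOp]

@[simp] lemma rep_Z (i : Fin n) : rep n q hq hq' (Z n q i) = oZ n q i := by
  rw [Z, rep, RingQuot.liftAlgHom_mkAlgHom_apply]
  simp [fRep, fZ, genOp]

/-- Evaluation functional: matrix coefficient of the representation. -/
def evL (μ ν : Fin n → ℕ) : H n q →ₗ[ℂ] ℂ where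
  toFun v := (rep n q hq hq' v) (Finsupp.single μ 1) ν
  map_add' u v := by simp
  map_smul' c v := by simp

@[simp] lemma evL_apply (μ ν : Fin n → ℕ) (v : H n q) :
    evL hq hq' μ ν v = (rep n q hq hq' v) (Finsupp.single μ 1) ν := rfl

def ones (n : ℕ) : Fin n → ℕ := fun _ => 1

/-- Coordinate functionals, dual to the generators on `genSpan`. -/
def coordL : GenIdx n → (H n q →ₗ[ℂ] ℂ)
  | Sum.inl j => evL hq hq' (ones n) (upi (ones n) j)
  | Sum.inr (Sum.inl j) => (-q)⁻¹ • evL hq hq' (ones n) (dni (ones n) j)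
  | Sum.inr (Sum.inr j) =>
      (q⁻¹ ^ 2 - q⁻¹)⁻¹ • (evL hq hq' (upi (ones n) j) (upi (ones n) j) -
        evL hq hq' (ones n) (ones n))

lemma upi_ne_self (μ : Fin n → ℕ) (i : Fin n) : upi μ i ≠ μ := by
  intro h
  have := congrFun h i
  simp at this

lemma dni_ne_self (μ : Fin n → ℕ) (i : Fin n) (h : 1 ≤ μ i) : dni μ i ≠ μ := by
  intro hc
  have := congrFun hc i
  rw [dni_at] at this
  omega

lemma dni_ne_upi (μ : Fin n → ℕ) (i j : Fin n) : dni μ i ≠ upi μ j := by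
  intro h
  have := congrFun h j
  rcases eq_or_ne i j with rfl | hij
  · rw [dni_at, upi_at] at this; omega
  · rw [dni_ne μ hij.symm, upi_at] at this
    omega

lemma upi_inj {μ : Fin n → ℕ} {i j : Fin n} (h : upi μ i = upi μ j) : i = j := by
  by_contra hij
  have := congrFun h i
  rw [upi_at, upi_ne μ hij] at this
  omega

lemma dni_ones_inj {i j : Fin n} (h : dni (ones n) i = dni (ones n) j) : i = j := by
  by_contra hij
  have := congrFun h i
  rw [dni_at, dni_ne (ones n) hij] at this
  simp [ones] at this

lemma cc_one (hq : q ≠ 0) (h2 : q ^ 2 ≠ 1) : cc q 1 = -q := by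
  have hd := one_sub_inv_sq_ne hq h2
  have hpq : q⁻¹ * q = 1 := inv_mul_cancel₀ hq
  have hDt : (1 - q⁻¹ ^ 2)⁻¹ * (1 - q⁻¹ ^ 2) = 1 := inv_mul_cancel₀ hd
  unfold cc
  linear_combination (-q) * hDt + (-((1 - q⁻¹ ^ 2)⁻¹ * q⁻¹)) * hpq

lemma cc_ne (hq : q ≠ 0) (hq' : NotRootOfUnity q) (k : ℕ) (hk : 1 ≤ k) : cc q k ≠ 0 := by
  have hd := one_sub_inv_sq_ne hq (hq' 2 (by norm_num))
  unfold cc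
  apply mul_ne_zero
  · rw [sub_ne_zero]
    intro h
    apply hq' (2 * k) (by omega)
    have h1 : q ^ k * q⁻¹ ^ k = 1 := by
      rw [← mul_pow, mul_inv_cancel₀ hq, one_pow]
    rw [h] at h1
    rw [two_mul, pow_add]
    exact h1
  · exact inv_ne_zero hd

lemma psq_sub_p_ne (hq : q ≠ 0) (hq' : NotRootOfUnity q) : (q⁻¹ ^ 2 - q⁻¹ : ℂ) ≠ 0 := by
  have hq1 : q ≠ 1 := by
    intro h; exact hq' 1 le_rfl (by rw [h, pow_one])
  intro h
  have hp : q⁻¹ ≠ 0 := inv_ne_zero hq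
  have : q⁻¹ * (q⁻¹ - 1) = 0 := by linear_combination h
  rcases mul_eq_zero.1 this with h' | h'
  · exact hp h'
  · rw [sub_eq_zero] at h'
    exact hq1 (by rw [← inv_inv q, h', inv_one])

end Coord
section Coord2

variable {n : ℕ} {q : ℂ} (hq : q ≠ 0) (hq' : NotRootOfUnity q)

lemma one_le_upi_ones (j i : Fin n) : 1 ≤ upi (ones n) j i := by
  rcases eq_or_ne i j with rfl | hij
  · rw [upi_at]; omega
  · rw [upi_ne _ hij]; exact le_rfl

lemma coordL_gen (g g' : GenIdx n) :
    coordL hq hq' g (gen n q g') = if g' = g then 1 else 0 := by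
  have h2 : q ^ 2 ≠ 1 := hq' 2 (by norm_num)
  obtain (j | j | j) := g <;> obtain (i | i | i) := g' <;>
    simp only [coordL, gen, Sum.elim_inl, Sum.elim_inr, LinearMap.smul_apply,
      LinearMap.sub_apply, evL_apply, rep_X, rep_Y, rep_Z, oX_single, oY_single, oZ_single,
      one_mul, smul_eq_mul, Finsupp.single_apply]
  · -- X vs coordX
    rcases eq_or_ne i j with rfl | hij
    · simp
    · rw [if_neg (fun hc => hij (upi_inj hc)), if_neg (by simp [hij])]
  · rw [if_neg (dni_ne_upi _ _ _)]
    simp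
  · rw [if_neg (Ne.symm (upi_ne_self _ _))]
    simp
  · rw [if_neg (Ne.symm (dni_ne_upi _ _ _))]
    simp
  · show (-q)⁻¹ * (if dni (ones n) i = dni (ones n) j then cc q (ones n i) else 0) = _
    rcases eq_or_ne i j with rfl | hij
    · rw [if_pos rfl]
      show (-q)⁻¹ * cc q 1 = _
      rw [cc_one hq h2, if_pos rfl, inv_mul_cancel₀ (neg_ne_zero.2 hq)]
    · rw [if_neg (fun hc => hij (dni_ones_inj hc)), if_neg (by simp [hij]), mul_zero]
  · rw [if_neg (Ne.symm (dni_ne_self (ones n) j le_rfl)), mul_zero]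
    simp
  · rw [if_neg (upi_ne_self _ i), if_neg (upi_ne_self _ i)]
    simp
  · rw [if_neg (fun hc => dni_ne_self _ i (one_le_upi_ones j i) hc),
      if_neg (fun hc => dni_ne_self (ones n) i le_rfl hc)]
    simp
  · simp only [if_true]
    show (q⁻¹ ^ 2 - q⁻¹)⁻¹ * (q⁻¹ ^ (upi (ones n) j i) - q⁻¹ ^ (ones n i)) = _
    rcases eq_or_ne i j with rfl | hij
    · rw [upi_at]
      show _ * (q⁻¹ ^ (1 + 1) - q⁻¹ ^ 1) = _
      rw [pow_one, if_pos rfl, inv_mul_cancel₀ (psq_sub_p_ne hq hq')]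
    · rw [upi_ne _ hij]
      show _ * (q⁻¹ ^ (ones n i) - q⁻¹ ^ (ones n i)) = _
      rw [sub_self, mul_zero, if_neg (by simp [hij])]

lemma genSpan_eq : genSpan n q = Submodule.span ℂ (Set.range (gen n q)) := by
  rw [genSpan]
  congr 1
  rw [gen, Set.Sum.elim_range, Set.Sum.elim_range, Set.union_assoc]

lemma gen_mem_genSpan (g : GenIdx n) : gen n q g ∈ genSpan n q := by
  rw [genSpan_eq]
  exact Submodule.subset_span ⟨g, rfl⟩

lemma repr_mem {v : H n q} (hv : v ∈ genSpan n q) :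
    ∑ g : GenIdx n, coordL hq hq' g v • gen n q g = v := by
  rw [genSpan_eq] at hv
  induction hv using Submodule.span_induction with
  | mem x h =>
    obtain ⟨g', rfl⟩ := h
    simp [coordL_gen hq hq', ite_smul, Finset.sum_ite_eq]
  | zero => simp
  | add x y hx hy ihx ihy =>
    simp only [map_add, add_smul, Finset.sum_add_distrib, ihx, ihy]
  | smul c x hx ihx =>
    simp only [map_smul, smul_eq_mul, mul_smul, ← Finset.smul_sum, ihx]

end Coord2
section Chars

variable {n : ℕ} {q : ℂ} (hq : q ≠ 0) (hq' : NotRootOfUnity q)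

def Zsub (n : ℕ) (q : ℂ) : Submodule ℂ (H n q) := Submodule.span ℂ (Set.range (Z n q))

lemma Z_mem_Zsub (k : Fin n) : Z n q k ∈ Zsub n q := Submodule.subset_span ⟨k, rfl⟩

lemma Zsub_le_genSpan : Zsub n q ≤ genSpan n q := by
  apply Submodule.span_le.2
  rintro _ ⟨k, rfl⟩
  exact gen_mem_genSpan (Sum.inr (Sum.inr k))

lemma gen_eq_X (i : Fin n) : gen n q (Sum.inl i) = X n q i := rfl
lemma gen_eq_Y (i : Fin n) : gen n q (Sum.inr (Sum.inl i)) = Y n q i := rfl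
lemma gen_eq_Z (i : Fin n) : gen n q (Sum.inr (Sum.inr i)) = Z n q i := rfl

lemma coordL_xy_of_Zsub {v : H n q} (hv : v ∈ Zsub n q) (g : GenIdx n)
    (hg : ∀ k : Fin n, g ≠ Sum.inr (Sum.inr k)) : coordL hq hq' g v = 0 := by
  induction hv using Submodule.span_induction with
  | mem x h =>
    obtain ⟨k, rfl⟩ := h
    rw [← gen_eq_Z, coordL_gen hq hq', if_neg (fun hc => hg k hc.symm)]
  | zero => simp
  | add x y hx hy ihx ihy => rw [map_add, ihx, ihy, add_zero]
  | smul c x hx ihx => rw [map_smul, ihx, smul_zero]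

lemma repr_Zsub {v : H n q} (hv : v ∈ genSpan n q)
    (hx : ∀ j, coordL hq hq' (Sum.inl j) v = 0)
    (hy : ∀ j, coordL hq hq' (Sum.inr (Sum.inl j)) v = 0) :
    v = ∑ k, coordL hq hq' (Sum.inr (Sum.inr k)) v • Z n q k := by
  conv_lhs => rw [← repr_mem hq hq' hv]
  rw [Fintype.sum_sum_type, Fintype.sum_sum_type]
  simp only [hx, hy, zero_smul, Finset.sum_const_zero, zero_add, gen_eq_Z]

lemma mem_Zsub_of_coords {v : H n q} (hv : v ∈ genSpan n q)
    (hx : ∀ j, coordL hq hq' (Sum.inl j) v = 0)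
    (hy : ∀ j, coordL hq hq' (Sum.inr (Sum.inl j)) v = 0) : v ∈ Zsub n q := by
  rw [repr_Zsub hq hq' hv hx hy]
  exact Submodule.sum_mem _ fun k _ => Submodule.smul_mem _ _ (Z_mem_Zsub k)

/-- The character sending `x_j ↦ 1` and all other generators to `0`. -/
def chiX (n : ℕ) (q : ℂ) (j : Fin n) : H n q →ₐ[ℂ] ℂ :=
  RingQuot.liftAlgHom ℂ ⟨FreeAlgebra.lift ℂ (fun g => if g = Sum.inl j then 1 else 0), by
    intro a b h
    induction h <;> simp [fX, fY, fZ, mul_comm]⟩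

/-- The character sending `y_j ↦ 1` and all other generators to `0`. -/
def chiY (n : ℕ) (q : ℂ) (j : Fin n) : H n q →ₐ[ℂ] ℂ :=
  RingQuot.liftAlgHom ℂ ⟨FreeAlgebra.lift ℂ (fun g => if g = Sum.inr (Sum.inl j) then 1 else 0), by
    intro a b h
    induction h <;> simp [fX, fY, fZ, mul_comm]⟩

lemma chiX_gen (j : Fin n) (g' : GenIdx n) :
    chiX n q j (gen n q g') = if g' = Sum.inl j then 1 else 0 := by
  obtain (i | i | i) := g' <;>
    simp [chiX, gen, X, Y, Z, RingQuot.liftAlgHom_mkAlgHom_apply, fX, fY, fZ]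

lemma chiY_gen (j : Fin n) (g' : GenIdx n) :
    chiY n q j (gen n q g') = if g' = Sum.inr (Sum.inl j) then 1 else 0 := by
  obtain (i | i | i) := g' <;>
    simp [chiY, gen, X, Y, Z, RingQuot.liftAlgHom_mkAlgHom_apply, fX, fY, fZ]

lemma chiX_eq_coordL {v : H n q} (hv : v ∈ genSpan n q) (j : Fin n) :
    chiX n q j v = coordL hq hq' (Sum.inl j) v := by
  rw [genSpan_eq] at hv
  induction hv using Submodule.span_induction with
  | mem x h =>
    obtain ⟨g', rfl⟩ := h
    rw [chiX_gen, coordL_gen hq hq']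
  | zero => simp
  | add x y hx hy ihx ihy => rw [map_add, map_add, ihx, ihy]
  | smul c x hx ihx => rw [map_smul, map_smul, ihx]

lemma chiY_eq_coordL {v : H n q} (hv : v ∈ genSpan n q) (j : Fin n) :
    chiY n q j v = coordL hq hq' (Sum.inr (Sum.inl j)) v := by
  rw [genSpan_eq] at hv
  induction hv using Submodule.span_induction with
  | mem x h =>
    obtain ⟨g', rfl⟩ := h
    rw [chiY_gen, coordL_gen hq hq']
  | zero => simp
  | add x y hx hy ihx ihy => rw [map_add, map_add, ihx, ihy]
  | smul c x hx ihx => rw [map_smul, map_smul, ihx]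

lemma char_kills_Z (hqa : q ≠ 0) (hqu : NotRootOfUnity q) (χ : H n q →ₐ[ℂ] ℂ) (i : Fin n) : χ (Z n q i) = 0 := by
  have hq1 : q ≠ 1 := fun h => hqu 1 le_rfl (by rw [h, pow_one])
  have hp1 : q⁻¹ ≠ 1 := fun h => hq1 (by rw [← inv_inv q, h, inv_one])
  have h1 := congrArg χ (HXZ (q := q) i)
  have h2 := congrArg χ (HYZ (q := q) i)
  have h3 := congrArg χ (HXY (q := q) i)
  rw [map_mul, map_smul, map_mul, smul_eq_mul] at h1 h2
  rw [map_mul, map_add, map_smul, map_mul, smul_eq_mul] at h3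
  set a := χ (X n q i)
  set b := χ (Y n q i)
  set c := χ (Z n q i)
  have hbc : b * c = 0 := by
    have h : (1 - q⁻¹) * (b * c) = 0 := by linear_combination h2
    rcases mul_eq_zero.1 h with h' | h'
    · exact absurd (by linear_combination -h' : q⁻¹ = 1) hp1
    · exact h'
  have hcc : c * c = 0 := by
    linear_combination (-c) * h3 + ((1 - q⁻¹) * a) * hbc
  exact mul_self_eq_zero.mp hcc

end Chars
section Extract

variable {n : ℕ} {q : ℂ} (hq : q ≠ 0) (hq' : NotRootOfUnity q)

def Gf (q : ℂ) (γ : Fin n → ℂ) (μ : Fin n → ℕ) : ℂ := ∑ k, γ k * q⁻¹ ^ (μ k)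

lemma sum_single_apply_eq {κ : Type*} [DecidableEq κ] (key : Fin n → κ) (coef : Fin n → ℂ)
    (j₀ : Fin n) (hinj : ∀ j, key j = key j₀ → j = j₀) :
    (∑ j, Finsupp.single (key j) (coef j)) (key j₀) = coef j₀ := by
  rw [Finsupp.finset_sum_apply]
  rw [Finset.sum_eq_single_of_mem j₀ (Finset.mem_univ _)]
  · rw [Finsupp.single_eq_same]
  · intro j _ hj
    rw [Finsupp.single_apply, if_neg (fun hc => hj (hinj j hc))]

lemma sum_single_apply_ne {κ : Type*} [DecidableEq κ] (key : Fin n → κ) (coef : Fin n → ℂ)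
    (ν : κ) (hne : ∀ j, key j ≠ ν) :
    (∑ j, Finsupp.single (key j) (coef j)) ν = 0 := by
  rw [Finsupp.finset_sum_apply]
  exact Finset.sum_eq_zero fun j _ => by
    rw [Finsupp.single_apply, if_neg (hne j)]

lemma dni_inj {μ : Fin n → ℕ} (hμ : ∀ m, 1 ≤ μ m) {i j : Fin n} (h : dni μ i = dni μ j) :
    i = j := by
  by_contra hij
  have := congrFun h i
  rw [dni_at, dni_ne μ hij] at this
  have := hμ i
  omega

/-- Action of a general element of `V` on a basis vector. -/
lemma repU_single (a b c : Fin n → ℂ) (μ : Fin n → ℕ) (r : ℂ) :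
    rep n q hq hq' (∑ j, (a j • X n q j + b j • Y n q j + c j • Z n q j)) (Finsupp.single μ r) =
      (∑ j, Finsupp.single (upi μ j) (a j * r)) +
      (∑ j, Finsupp.single (dni μ j) (b j * r * cc q (μ j))) +
      Finsupp.single μ (r * Gf q c μ) := by
  rw [map_sum, LinearMap.coe_sum, Finset.sum_apply]
  have : ∀ j : Fin n, (rep n q hq hq' (a j • X n q j + b j • Y n q j + c j • Z n q j))
      (Finsupp.single μ r) = Finsupp.single (upi μ j) (a j * r) +
      Finsupp.single (dni μ j) (b j * r * cc q (μ j)) +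
      Finsupp.single μ ((c j * q⁻¹ ^ (μ j)) * r) := by
    intro j
    rw [map_add, map_add, map_smul, map_smul, map_smul, rep_X, rep_Y, rep_Z]
    simp only [LinearMap.add_apply, LinearMap.smul_apply, oX_single, oY_single, oZ_single,
      Finsupp.smul_single']
    congr 2
    · ring
    · ring
  rw [Finset.sum_congr rfl fun j _ => this j]
  rw [Finset.sum_add_distrib, Finset.sum_add_distrib, ← Finsupp.single_finset_sum]
  congr 1
  congr 1
  rw [Gf, Finset.mul_sum]
  exact Finset.sum_congr rfl fun k _ => by ring

lemma repW_single (γ : Fin n → ℂ) (μ : Fin n → ℕ) (r : ℂ) :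
    rep n q hq hq' (∑ k, γ k • Z n q k) (Finsupp.single μ r) =
      Finsupp.single μ (r * Gf q γ μ) := by
  rw [map_sum, LinearMap.coe_sum, Finset.sum_apply]
  have : ∀ k : Fin n, (rep n q hq hq' (γ k • Z n q k)) (Finsupp.single μ r) =
      Finsupp.single μ (r * (γ k * q⁻¹ ^ (μ k))) := by
    intro k
    rw [map_smul, rep_Z]
    simp only [LinearMap.smul_apply, oZ_single, Finsupp.smul_single']
    congr 1
    ring
  rw [Finset.sum_congr rfl fun k _ => this k, ← Finsupp.single_finset_sum]
  congr 1
  rw [Gf, Finset.mul_sum]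

/-- The master extraction lemma: scalar consequences of `u * w = λ • (w * u)`. -/
lemma extract (hq : q ≠ 0) (hq' : NotRootOfUnity q) (lam : ℂ) (a b c γ : Fin n → ℂ)
    (h : (∑ j, (a j • X n q j + b j • Y n q j + c j • Z n q j)) * (∑ k, γ k • Z n q k) =
      lam • ((∑ k, γ k • Z n q k) * (∑ j, (a j • X n q j + b j • Y n q j + c j • Z n q j)))) :
    (∀ (μ : Fin n → ℕ) (hμ : ∀ m, 1 ≤ μ m) (j : Fin n),
        a j * (Gf q γ μ - lam * Gf q γ (upi μ j)) = 0) ∧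
    (∀ (μ : Fin n → ℕ) (hμ : ∀ m, 1 ≤ μ m) (j : Fin n),
        b j * cc q (μ j) * (Gf q γ μ - lam * Gf q γ (dni μ j)) = 0) ∧
    (∀ (μ : Fin n → ℕ) (hμ : ∀ m, 1 ≤ μ m), (1 - lam) * (Gf q c μ * Gf q γ μ) = 0) := by
  have R : rep n q hq hq' (∑ j, (a j • X n q j + b j • Y n q j + c j • Z n q j)) *
      rep n q hq hq' (∑ k, γ k • Z n q k) =
      lam • (rep n q hq hq' (∑ k, γ k • Z n q k) *
        rep n q hq hq' (∑ j, (a j • X n q j + b j • Y n q j + c j • Z n q j))) := by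
    rw [← map_mul, ← map_mul, ← map_smul]
    exact congrArg _ h
  have key : ∀ (μ : Fin n → ℕ) (ν : Fin n → ℕ),
      ((∑ j, Finsupp.single (upi μ j) (a j * (1 * Gf q γ μ))) +
      (∑ j, Finsupp.single (dni μ j) (b j * (1 * Gf q γ μ) * cc q (μ j))) +
      Finsupp.single μ ((1 * Gf q γ μ) * Gf q c μ)) ν =
      lam * (((∑ j, Finsupp.single (upi μ j) ((a j * 1) * Gf q γ (upi μ j))) +
      (∑ j, Finsupp.single (dni μ j) ((b j * 1 * cc q (μ j)) * Gf q γ (dni μ j))) +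
      Finsupp.single μ ((1 * Gf q c μ) * Gf q γ μ))) ν := by
    intro μ ν
    have h1 := LinearMap.congr_fun R (Finsupp.single μ (1 : ℂ))
    rw [Module.End.mul_apply, LinearMap.smul_apply, Module.End.mul_apply] at h1
    rw [repW_single hq hq'] at h1
    rw [repU_single hq hq'] at h1
    rw [repU_single hq hq'] at h1
    rw [map_add (rep n q hq hq' (∑ k, γ k • Z n q k)),
      map_add (rep n q hq hq' (∑ k, γ k • Z n q k)),
      map_sum (rep n q hq hq' (∑ k, γ k • Z n q k)) _ Finset.univ,
      map_sum (rep n q hq hq' (∑ k, γ k • Z n q k)) _ Finset.univ] at h1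
    simp only [repW_single hq hq'] at h1
    have h2 := congrArg (fun f : P n => f ν) h1
    simpa only [Finsupp.smul_apply, smul_eq_mul] using h2
  refine ⟨?_, ?_, ?_⟩
  · intro μ hμ j
    have hk := key μ (upi μ j)
    rw [Finsupp.add_apply, Finsupp.add_apply, Finsupp.add_apply, Finsupp.add_apply,
      sum_single_apply_eq (fun j => upi μ j) _ j (fun j' hj' => upi_inj hj'),
      sum_single_apply_eq (fun j => upi μ j) _ j (fun j' hj' => upi_inj hj'),
      sum_single_apply_ne _ _ _ (fun j' => dni_ne_upi μ j' j),
      sum_single_apply_ne _ _ _ (fun j' => dni_ne_upi μ j' j),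
      Finsupp.single_apply, if_neg (Ne.symm (upi_ne_self μ j)),
      Finsupp.single_apply, if_neg (Ne.symm (upi_ne_self μ j))] at hk
    linear_combination hk
  · intro μ hμ j
    have hk := key μ (dni μ j)
    rw [Finsupp.add_apply, Finsupp.add_apply, Finsupp.add_apply, Finsupp.add_apply,
      sum_single_apply_ne _ _ _ (fun j' => (dni_ne_upi μ j j').symm),
      sum_single_apply_ne _ _ _ (fun j' => (dni_ne_upi μ j j').symm),
      sum_single_apply_eq (fun j => dni μ j) _ j (fun j' hj' => dni_inj hμ hj'),
      sum_single_apply_eq (fun j => dni μ j) _ j (fun j' hj' => dni_inj hμ hj'),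
      Finsupp.single_apply, if_neg (Ne.symm (dni_ne_self μ j (hμ j))),
      Finsupp.single_apply, if_neg (Ne.symm (dni_ne_self μ j (hμ j)))] at hk
    linear_combination hk
  · intro μ hμ
    have hk := key μ μ
    rw [Finsupp.add_apply, Finsupp.add_apply, Finsupp.add_apply, Finsupp.add_apply,
      sum_single_apply_ne _ _ _ (fun j' => upi_ne_self μ j'),
      sum_single_apply_ne _ _ _ (fun j' => upi_ne_self μ j'),
      sum_single_apply_ne _ _ _ (fun j' => dni_ne_self μ j' (hμ j')),
      sum_single_apply_ne _ _ _ (fun j' => dni_ne_self μ j' (hμ j')),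
      Finsupp.single_eq_same, Finsupp.single_eq_same] at hk
    linear_combination hk

end Extract
section ScalarCons

variable {n : ℕ} {q : ℂ}

@[simp] lemma ones_apply (m : Fin n) : ones n m = 1 := rfl

lemma Gf_ones (γ : Fin n → ℂ) : Gf q γ (ones n) = q⁻¹ * ∑ k, γ k := by
  rw [Gf, Finset.mul_sum]
  exact Finset.sum_congr rfl fun k _ => by rw [ones_apply, pow_one]; ring

lemma Gf_upi (γ : Fin n → ℂ) (μ : Fin n → ℕ) (j : Fin n) :
    Gf q γ (upi μ j) = Gf q γ μ + γ j * (q⁻¹ ^ (μ j + 1) - q⁻¹ ^ (μ j)) := by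
  have key : ∀ k : Fin n, γ k * q⁻¹ ^ (upi μ j k) = γ k * q⁻¹ ^ (μ k) +
      (if k = j then γ j * (q⁻¹ ^ (μ j + 1) - q⁻¹ ^ (μ j)) else 0) := by
    intro k
    rcases eq_or_ne k j with rfl | hkj
    · rw [if_pos rfl, upi_at]; ring
    · rw [if_neg hkj, upi_ne μ hkj, add_zero]
  rw [Gf, Finset.sum_congr rfl fun k _ => key k, Finset.sum_add_distrib,
    Finset.sum_ite_eq' Finset.univ j, if_pos (Finset.mem_univ _), ← Gf]

lemma Gf_dni (γ : Fin n → ℂ) (μ : Fin n → ℕ) (j : Fin n) :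
    Gf q γ (dni μ j) = Gf q γ μ + γ j * (q⁻¹ ^ (μ j - 1) - q⁻¹ ^ (μ j)) := by
  have key : ∀ k : Fin n, γ k * q⁻¹ ^ (dni μ j k) = γ k * q⁻¹ ^ (μ k) +
      (if k = j then γ j * (q⁻¹ ^ (μ j - 1) - q⁻¹ ^ (μ j)) else 0) := by
    intro k
    rcases eq_or_ne k j with rfl | hkj
    · rw [if_pos rfl, dni_at]; ring
    · rw [if_neg hkj, dni_ne μ hkj, add_zero]
  rw [Gf, Finset.sum_congr rfl fun k _ => key k, Finset.sum_add_distrib,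
    Finset.sum_ite_eq' Finset.univ j, if_pos (Finset.mem_univ _), ← Gf]

lemma scalarCons (hq : q ≠ 0) (hq' : NotRootOfUnity q) (lam : ℂ) (hlam : lam ≠ 1)
    (a b γ : Fin n → ℂ)
    (E1 : ∀ (μ : Fin n → ℕ), (∀ m, 1 ≤ μ m) → ∀ (j : Fin n),
        a j * (Gf q γ μ - lam * Gf q γ (upi μ j)) = 0)
    (E2 : ∀ (μ : Fin n → ℕ), (∀ m, 1 ≤ μ m) → ∀ (j : Fin n),
        b j * cc q (μ j) * (Gf q γ μ - lam * Gf q γ (dni μ j)) = 0) :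
    (∀ j k, j ≠ k → a j * γ k = 0) ∧ ((∀ j k, j ≠ k → b j * γ k = 0) ∧
    ((∀ j, a j * γ j * (q⁻¹ * (1 - lam * q⁻¹)) = 0) ∧
    (∀ j, b j * γ j * (q⁻¹ - lam) = 0))) := by
  have hones : ∀ m : Fin n, 1 ≤ ones n m := fun m => le_rfl
  have hupi : ∀ k m : Fin n, 1 ≤ upi (ones n) k m := fun k m => one_le_upi_ones k m
  have hd := psq_sub_p_ne hq hq'
  have h1lam : (1 : ℂ) - lam ≠ 0 := sub_ne_zero.2 (Ne.symm hlam)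
  have hcc1 : cc q 1 ≠ 0 := cc_ne hq hq' 1 le_rfl
  have offa : ∀ j k, j ≠ k → a j * γ k = 0 := by
    intro j k hjk
    have e0 := E1 (ones n) hones j
    have e1 := E1 (upi (ones n) k) (hupi k) j
    simp only [Gf_upi, upi_ne (ones n) hjk, ones_apply] at e0 e1
    have key : a j * γ k * ((q⁻¹ ^ 2 - q⁻¹) * (1 - lam)) = 0 := by
      linear_combination e1 - e0
    exact (mul_eq_zero.1 key).resolve_right (mul_ne_zero hd h1lam)
  have offb : ∀ j k, j ≠ k → b j * γ k = 0 := by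
    intro j k hjk
    have e0 := E2 (ones n) hones j
    have e1 := E2 (upi (ones n) k) (hupi k) j
    simp only [Gf_dni, Gf_upi, upi_ne (ones n) hjk, ones_apply] at e0 e1
    have key : b j * γ k * (cc q 1 * ((q⁻¹ ^ 2 - q⁻¹) * (1 - lam))) = 0 := by
      linear_combination e1 - e0
    exact (mul_eq_zero.1 key).resolve_right
      (mul_ne_zero hcc1 (mul_ne_zero hd h1lam))
  refine ⟨offa, offb, ?_, ?_⟩
  · intro j
    have hS : a j * (∑ k, γ k) = a j * γ j := by
      rw [Finset.mul_sum]
      rw [Finset.sum_eq_single j (fun k _ hk => offa j k (Ne.symm hk))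
        (fun h => absurd (Finset.mem_univ _) h)]
    have e0 := E1 (ones n) hones j
    simp only [Gf_upi, Gf_ones, ones_apply] at e0
    linear_combination e0 + (lam * q⁻¹ - q⁻¹) * hS
  · intro j
    have hS : b j * (∑ k, γ k) = b j * γ j := by
      rw [Finset.mul_sum]
      rw [Finset.sum_eq_single j (fun k _ hk => offb j k (Ne.symm hk))
        (fun h => absurd (Finset.mem_univ _) h)]
    have e0 := E2 (ones n) hones j
    simp only [Gf_dni, Gf_ones, ones_apply] at e0
    have key : b j * γ j * (q⁻¹ - lam) * cc q 1 = 0 := by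
      linear_combination e0 + (lam * q⁻¹ - q⁻¹) * cc q 1 * hS
    exact (mul_eq_zero.1 key).resolve_right hcc1

lemma c_vanish (hq : q ≠ 0) (hq' : NotRootOfUnity q) (lam : ℂ) (hlam : lam ≠ 1)
    (c γ : Fin n → ℂ) (k₀ : Fin n) (hγ : ∀ k, k ≠ k₀ → γ k = 0) (hγ0 : γ k₀ ≠ 0)
    (E3 : ∀ (μ : Fin n → ℕ), (∀ m, 1 ≤ μ m) → (1 - lam) * (Gf q c μ * Gf q γ μ) = 0) :
    ∀ m, c m = 0 := by
  have h1lam : (1 : ℂ) - lam ≠ 0 := sub_ne_zero.2 (Ne.symm hlam)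
  have hp : (q⁻¹ : ℂ) ≠ 0 := inv_ne_zero hq
  have hGγ : ∀ μ : Fin n → ℕ, Gf q γ μ = γ k₀ * q⁻¹ ^ (μ k₀) := by
    intro μ
    rw [Gf, Finset.sum_eq_single k₀ (fun k _ hk => by rw [hγ k hk, zero_mul])
      (fun h => absurd (Finset.mem_univ _) h)]
  have hGc : ∀ μ : Fin n → ℕ, (∀ m, 1 ≤ μ m) → Gf q c μ = 0 := by
    intro μ hμ
    have h := E3 μ hμ
    rw [hGγ] at h
    rcases mul_eq_zero.1 h with h' | h'
    · exact absurd h' h1lam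
    · rcases mul_eq_zero.1 h' with h'' | h''
      · exact h''
      · exact absurd h'' (mul_ne_zero hγ0 (pow_ne_zero _ hp))
  intro m
  have h0 := hGc (ones n) (fun _ => le_rfl)
  have h1 := hGc (upi (ones n) m) (fun k => one_le_upi_ones m k)
  rw [Gf_upi, ones_apply, h0, zero_add] at h1
  have key : c m * (q⁻¹ ^ 2 - q⁻¹) = 0 := by linear_combination h1
  exact (mul_eq_zero.1 key).resolve_right (psq_sub_p_ne hq hq')

end ScalarCons
section Build

variable {n : ℕ} {q : ℂ}

lemma algHom_ext {A : Type*} [Semiring A] [Algebra ℂ A] {f g : H n q →ₐ[ℂ] A}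
    (h : ∀ gi : GenIdx n, f (gen n q gi) = g (gen n q gi)) : f = g := by
  suffices hfg : f.comp (RingQuot.mkAlgHom ℂ (Rel n q)) =
      g.comp (RingQuot.mkAlgHom ℂ (Rel n q)) by
    refine AlgHom.ext fun x => ?_
    obtain ⟨y, rfl⟩ := RingQuot.mkAlgHom_surjective ℂ (Rel n q) x
    exact AlgHom.congr_fun hfg y
  apply FreeAlgebra.hom_ext
  funext gi
  simp only [Function.comp_apply, AlgHom.comp_apply]
  rcases gi with i | i | i
  · exact h (Sum.inl i)
  · exact h (Sum.inr (Sum.inl i))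
  · exact h (Sum.inr (Sum.inr i))

lemma smulmul (r s : ℂ) (x y : H n q) : (r • x) * (s • y) = (r * s) • (x * y) := by
  rw [smul_mul_assoc, mul_smul_comm, smul_smul]

def mapGen (q : ℂ) (a b : Fin n → ℂ) (π : Equiv.Perm (Fin n)) : GenIdx n → H n q
  | Sum.inl i => a (π i) • X n q (π i)
  | Sum.inr (Sum.inl i) => b (π i) • Y n q (π i)
  | Sum.inr (Sum.inr i) => (a (π i) * b (π i)) • Z n q (π i)

/-- The algebra endomorphism determined by rescaling and permuting the generators. -/
def bld (q : ℂ) (a b : Fin n → ℂ) (π : Equiv.Perm (Fin n)) : H n q →ₐ[ℂ] H n q :=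
  RingQuot.liftAlgHom ℂ ⟨FreeAlgebra.lift ℂ (mapGen q a b π), by
    intro x y h
    induction h with
    | xx i j =>
      simp only [map_mul, fX, FreeAlgebra.lift_ι_apply, mapGen]
      rw [smulmul, smulmul, HXX (π i) (π j), mul_comm (a (π i)) (a (π j))]
    | yy i j =>
      simp only [map_mul, fY, FreeAlgebra.lift_ι_apply, mapGen]
      rw [smulmul, smulmul, HYY (π i) (π j), mul_comm (b (π i)) (b (π j))]
    | zz i j =>
      simp only [map_mul, fZ, FreeAlgebra.lift_ι_apply, mapGen]
      rw [smulmul, smulmul, HZZ (π i) (π j),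
        mul_comm (a (π i) * b (π i)) (a (π j) * b (π j))]
    | xz i =>
      simp only [map_mul, map_smul, fX, fZ, FreeAlgebra.lift_ι_apply, mapGen]
      rw [smulmul, smulmul, HXZ (π i), smul_smul, smul_smul]
      congr 1
      ring
    | yz i =>
      simp only [map_mul, map_smul, fY, fZ, FreeAlgebra.lift_ι_apply, mapGen]
      rw [smulmul, smulmul, HYZ (π i), smul_smul, smul_smul]
      congr 1
      ring
    | xy i =>
      simp only [map_mul, map_smul, map_add, fX, fY, fZ, FreeAlgebra.lift_ι_apply, mapGen]
      rw [smulmul, smulmul, HXY (π i), smul_add, smul_smul, smul_smul]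
      congr 1
      congr 1
      ring
    | xyne i j hij =>
      simp only [map_mul, fX, fY, FreeAlgebra.lift_ι_apply, mapGen]
      rw [smulmul, smulmul, HXYne (fun hc => hij (π.injective hc)),
        mul_comm (a (π i)) (b (π j))]
    | xzne i j hij =>
      simp only [map_mul, fX, fZ, FreeAlgebra.lift_ι_apply, mapGen]
      rw [smulmul, smulmul, HXZne (fun hc => hij (π.injective hc)),
        mul_comm (a (π i)) (a (π j) * b (π j))]
    | yzne i j hij =>
      simp only [map_mul, fY, fZ, FreeAlgebra.lift_ι_apply, mapGen]
      rw [smulmul, smulmul, HYZne (fun hc => hij (π.injective hc)),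
        mul_comm (b (π i)) (a (π j) * b (π j))]⟩

@[simp] lemma bld_X (a b : Fin n → ℂ) (π : Equiv.Perm (Fin n)) (i : Fin n) :
    bld q a b π (X n q i) = a (π i) • X n q (π i) := by
  rw [X, bld, RingQuot.liftAlgHom_mkAlgHom_apply]
  simp [fX, mapGen]

@[simp] lemma bld_Y (a b : Fin n → ℂ) (π : Equiv.Perm (Fin n)) (i : Fin n) :
    bld q a b π (Y n q i) = b (π i) • Y n q (π i) := by
  rw [Y, bld, RingQuot.liftAlgHom_mkAlgHom_apply]
  simp [fY, mapGen]

@[simp] lemma bld_Z (a b : Fin n → ℂ) (π : Equiv.Perm (Fin n)) (i : Fin n) :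
    bld q a b π (Z n q i) = (a (π i) * b (π i)) • Z n q (π i) := by
  rw [Z, bld, RingQuot.liftAlgHom_mkAlgHom_apply]
  simp [fZ, mapGen]

lemma bld_comp (a b a' b' : Fin n → ℂ) (π π' : Equiv.Perm (Fin n)) :
    (bld q a b π).comp (bld q a' b' π') =
      bld q (fun j => a j * a' (π⁻¹ j)) (fun j => b j * b' (π⁻¹ j)) (π * π') := by
  apply algHom_ext
  rintro (i | i | i) <;>
    simp only [gen, Sum.elim_inl, Sum.elim_inr, AlgHom.comp_apply, bld_X, bld_Y, bld_Z,
      map_smul, smul_smul, Equiv.Perm.mul_apply, Equiv.Perm.inv_def, Equiv.symm_apply_apply] <;>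
    congr 1 <;> ring

lemma bld_id : bld q (fun _ => (1 : ℂ)) (fun _ => 1) 1 = AlgHom.id ℂ (H n q) := by
  apply algHom_ext
  rintro (i | i | i) <;>
    simp [gen, Equiv.Perm.one_apply]

lemma bld_comp_id (a b a' b' : Fin n → ℂ) (π : Equiv.Perm (Fin n))
    (ha : ∀ i, a' i * a (π i) = 1) (hb : ∀ i, b' i * b (π i) = 1) :
    (bld q a' b' π⁻¹).comp (bld q a b π) = AlgHom.id ℂ (H n q) := by
  rw [bld_comp]
  have h1 : (fun j => a' j * a (π⁻¹⁻¹ j)) = fun _ => (1 : ℂ) := by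
    funext j; rw [inv_inv]; exact ha j
  have h2 : (fun j => b' j * b (π⁻¹⁻¹ j)) = fun _ => (1 : ℂ) := by
    funext j; rw [inv_inv]; exact hb j
  rw [h1, h2, inv_mul_cancel]
  exact bld_id

/-- Build an algebra automorphism from units and a permutation. -/
def bldE (q : ℂ) (A B : Fin n → ℂˣ) (π : Equiv.Perm (Fin n)) : H n q ≃ₐ[ℂ] H n q :=
  AlgEquiv.ofAlgHom (bld q (fun j => (A j : ℂ)) (fun j => (B j : ℂ)) π)
    (bld q (fun j => ((A (π j))⁻¹ : ℂˣ)) (fun j => ((B (π j))⁻¹ : ℂˣ)) π⁻¹)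
    (by
      have := bld_comp_id (q := q) (n := n)
        (fun j => ((A (π j))⁻¹ : ℂˣ)) (fun j => ((B (π j))⁻¹ : ℂˣ))
        (fun j => (A j : ℂ)) (fun j => (B j : ℂ)) π⁻¹
        (fun i => by simp) (fun i => by simp)
      rwa [inv_inv] at this)
    (by
      exact bld_comp_id _ _ _ _ π (fun i => by simp) (fun i => by simp))

@[simp] lemma bldE_X (A B : Fin n → ℂˣ) (π : Equiv.Perm (Fin n)) (i : Fin n) :
    bldE q A B π (X n q i) = (A (π i) : ℂ) • X n q (π i) := bld_X _ _ _ _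
@[simp] lemma bldE_Y (A B : Fin n → ℂˣ) (π : Equiv.Perm (Fin n)) (i : Fin n) :
    bldE q A B π (Y n q i) = (B (π i) : ℂ) • Y n q (π i) := bld_Y _ _ _ _
@[simp] lemma bldE_Z (A B : Fin n → ℂˣ) (π : Equiv.Perm (Fin n)) (i : Fin n) :
    bldE q A B π (Z n q i) = ((A (π i) : ℂ) * (B (π i) : ℂ)) • Z n q (π i) := bld_Z _ _ _ _

lemma mem_gradedAut_of (e : H n q ≃ₐ[ℂ] H n q)
    (h1 : ∀ g, e (gen n q g) ∈ genSpan n q)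
    (h2 : ∀ g, e.symm (gen n q g) ∈ genSpan n q) : e ∈ gradedAut n q := by
  have le1 : Submodule.map e.toLinearMap (genSpan n q) ≤ genSpan n q := by
    rw [genSpan_eq, Submodule.map_span, Submodule.span_le]
    rintro _ ⟨_, ⟨g, rfl⟩, rfl⟩
    rw [← genSpan_eq]
    exact h1 g
  have le2 : Submodule.map e.symm.toLinearMap (genSpan n q) ≤ genSpan n q := by
    rw [genSpan_eq, Submodule.map_span, Submodule.span_le]
    rintro _ ⟨_, ⟨g, rfl⟩, rfl⟩
    rw [← genSpan_eq]
    exact h2 g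
  show Submodule.map e.toLinearMap (genSpan n q) = genSpan n q
  apply le_antisymm le1
  intro v hv
  refine ⟨e.symm v, le2 (Submodule.mem_map_of_mem hv), ?_⟩
  exact e.apply_symm_apply v

lemma bldE_mem (A B : Fin n → ℂˣ) (π : Equiv.Perm (Fin n)) :
    bldE q A B π ∈ gradedAut n q := by
  have hX : ∀ k, X n q k ∈ genSpan n q := fun k => gen_mem_genSpan (Sum.inl k)
  have hY : ∀ k, Y n q k ∈ genSpan n q := fun k => gen_mem_genSpan (Sum.inr (Sum.inl k))
  have hZ : ∀ k, Z n q k ∈ genSpan n q := fun k => gen_mem_genSpan (Sum.inr (Sum.inr k))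
  apply mem_gradedAut_of
  · rintro (i | i | i)
    · rw [gen_eq_X, bldE_X]; exact Submodule.smul_mem _ _ (hX _)
    · rw [gen_eq_Y, bldE_Y]; exact Submodule.smul_mem _ _ (hY _)
    · rw [gen_eq_Z, bldE_Z]; exact Submodule.smul_mem _ _ (hZ _)
  · rintro (i | i | i)
    · rw [gen_eq_X,
        show (bldE q A B π).symm (X n q i) = bld q (fun j => (((A (π j))⁻¹ : ℂˣ) : ℂ))
          (fun j => (((B (π j))⁻¹ : ℂˣ) : ℂ)) π⁻¹ (X n q i) from rfl, bld_X]
      exact Submodule.smul_mem _ _ (hX _)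
    · rw [gen_eq_Y,
        show (bldE q A B π).symm (Y n q i) = bld q (fun j => (((A (π j))⁻¹ : ℂˣ) : ℂ))
          (fun j => (((B (π j))⁻¹ : ℂˣ) : ℂ)) π⁻¹ (Y n q i) from rfl, bld_Y]
      exact Submodule.smul_mem _ _ (hY _)
    · rw [gen_eq_Z,
        show (bldE q A B π).symm (Z n q i) = bld q (fun j => (((A (π j))⁻¹ : ℂˣ) : ℂ))
          (fun j => (((B (π j))⁻¹ : ℂˣ) : ℂ)) π⁻¹ (Z n q i) from rfl, bld_Z]
      exact Submodule.smul_mem _ _ (hZ _)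

end Build
section Classify

variable {n : ℕ} {q : ℂ}

lemma repr3 (hq : q ≠ 0) (hq' : NotRootOfUnity q) {v : H n q} (hv : v ∈ genSpan n q) :
    v = ∑ j, (coordL hq hq' (Sum.inl j) v • X n q j +
      coordL hq hq' (Sum.inr (Sum.inl j)) v • Y n q j +
      coordL hq hq' (Sum.inr (Sum.inr j)) v • Z n q j) := by
  conv_lhs => rw [← repr_mem hq hq' hv]
  rw [Fintype.sum_sum_type, Fintype.sum_sum_type, Finset.sum_add_distrib,
    Finset.sum_add_distrib]
  simp only [gen_eq_X, gen_eq_Y, gen_eq_Z]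
  rw [add_assoc]

theorem classify (hq : q ≠ 0) (hq' : NotRootOfUnity q)
    (φ : H n q ≃ₐ[ℂ] H n q) (hφ : φ ∈ gradedAut n q) :
    ∃ (A B : Fin n → ℂˣ) (π : Equiv.Perm (Fin n)), φ = bldE q A B π := by
  have hq1 : q ≠ 1 := fun h => hq' 1 le_rfl (by rw [h, pow_one])
  have h2 : q ^ 2 ≠ 1 := hq' 2 (by norm_num)
  have hp1 : (q⁻¹ : ℂ) ≠ 1 := fun h => hq1 (by rw [← inv_inv q, h, inv_one])
  have hpq_ne : (q⁻¹ : ℂ) - q ≠ 0 := by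
    intro h
    have h4 : q⁻¹ = q := by linear_combination h
    have h3 : q * q⁻¹ = 1 := mul_inv_cancel₀ hq
    rw [h4] at h3
    exact h2 (by rw [pow_two]; exact h3)
  have hdiag_ne : q⁻¹ * (1 - q⁻¹ * q⁻¹) ≠ 0 :=
    mul_ne_zero (inv_ne_zero hq)
      (by have := one_sub_inv_sq_ne hq h2; rwa [pow_two] at this)
  have heq : Submodule.map φ.toLinearMap (genSpan n q) = genSpan n q := hφ
  have hmem : ∀ v ∈ genSpan n q, φ v ∈ genSpan n q := by
    intro v hv
    have h := Submodule.mem_map_of_mem (f := φ.toLinearMap) hv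
    rw [heq] at h
    exact h
  have heqinv : Submodule.map (φ⁻¹ : H n q ≃ₐ[ℂ] H n q).toLinearMap (genSpan n q) =
      genSpan n q := (gradedAut n q).inv_mem hφ
  have hsymmem : ∀ v ∈ genSpan n q, φ.symm v ∈ genSpan n q := by
    intro v hv
    have h := Submodule.mem_map_of_mem (f := (φ⁻¹ : H n q ≃ₐ[ℂ] H n q).toLinearMap) hv
    rw [heqinv] at h
    exact h
  -- any graded map sends the z-span into itself
  have hZcoords : ∀ (ψe : H n q ≃ₐ[ℂ] H n q), (∀ v ∈ genSpan n q, ψe v ∈ genSpan n q) →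
      ∀ i, ψe (Z n q i) ∈ Zsub n q := by
    intro ψe hm i
    have hs : ψe (Z n q i) ∈ genSpan n q := hm _ (gen_mem_genSpan (Sum.inr (Sum.inr i)))
    apply mem_Zsub_of_coords hq hq' hs
    · intro j
      rw [← chiX_eq_coordL hq hq' hs j]
      have := char_kills_Z hq hq' ((chiX n q j).comp ψe.toAlgHom) i
      rwa [AlgHom.comp_apply] at this
    · intro j
      rw [← chiY_eq_coordL hq hq' hs j]
      have := char_kills_Z hq hq' ((chiY n q j).comp ψe.toAlgHom) i
      rwa [AlgHom.comp_apply] at this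
  have hZsubmap : ∀ v ∈ Zsub n q, φ.symm v ∈ Zsub n q := by
    intro v hv
    induction hv using Submodule.span_induction with
    | mem x h => obtain ⟨k, rfl⟩ := h; exact hZcoords φ.symm hsymmem k
    | zero => rw [map_zero]; exact Submodule.zero_mem _
    | add x y hx hy ihx ihy => rw [map_add]; exact Submodule.add_mem _ ihx ihy
    | smul c x hx ihx => rw [map_smul]; exact Submodule.smul_mem _ _ ihx
  have main : ∀ i : Fin n, ∃ (sa sb : ℂ) (t : Fin n), sa ≠ 0 ∧ sb ≠ 0 ∧
      φ (X n q i) = sa • X n q t ∧ φ (Y n q i) = sb • Y n q t ∧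
      φ (Z n q i) = (sa * sb) • Z n q t := by
    intro i
    have hwspan : φ (Z n q i) ∈ genSpan n q :=
      hmem _ (gen_mem_genSpan (Sum.inr (Sum.inr i)))
    have hxspan : φ (X n q i) ∈ genSpan n q := hmem _ (gen_mem_genSpan (Sum.inl i))
    have hyspan : φ (Y n q i) ∈ genSpan n q :=
      hmem _ (gen_mem_genSpan (Sum.inr (Sum.inl i)))
    have hxz : ∀ j, coordL hq hq' (Sum.inl j) (φ (Z n q i)) = 0 := by
      intro j
      rw [← chiX_eq_coordL hq hq' hwspan j]
      have := char_kills_Z hq hq' ((chiX n q j).comp φ.toAlgHom) i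
      rwa [AlgHom.comp_apply] at this
    have hyz : ∀ j, coordL hq hq' (Sum.inr (Sum.inl j)) (φ (Z n q i)) = 0 := by
      intro j
      rw [← chiY_eq_coordL hq hq' hwspan j]
      have := char_kills_Z hq hq' ((chiY n q j).comp φ.toAlgHom) i
      rwa [AlgHom.comp_apply] at this
    have hw := repr_Zsub hq hq' hwspan hxz hyz
    -- extraction for u := φ (X i)
    have hXZr := congrArg φ (HXZ (n := n) (q := q) i)
    rw [map_mul, map_smul, map_mul] at hXZr
    obtain ⟨E1, E2, E3⟩ := extract hq hq' q
      (fun j => coordL hq hq' (Sum.inl j) (φ (X n q i)))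
      (fun j => coordL hq hq' (Sum.inr (Sum.inl j)) (φ (X n q i)))
      (fun j => coordL hq hq' (Sum.inr (Sum.inr j)) (φ (X n q i)))
      (fun k => coordL hq hq' (Sum.inr (Sum.inr k)) (φ (Z n q i)))
      (by rw [← repr3 hq hq' hxspan, ← hw]; exact hXZr)
    obtain ⟨offaU, offbU, -, diagbU⟩ := scalarCons hq hq' q hq1 _ _ _ E1 E2
    have ballU : ∀ j k, coordL hq hq' (Sum.inr (Sum.inl j)) (φ (X n q i)) *
        coordL hq hq' (Sum.inr (Sum.inr k)) (φ (Z n q i)) = 0 := by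
      intro j k
      rcases eq_or_ne j k with rfl | hjk
      · exact (mul_eq_zero.1 (diagbU j)).resolve_right hpq_ne
      · exact offbU j k hjk
    -- extraction for v := φ (Y i)
    have hYZr := congrArg φ (HYZ (n := n) (q := q) i)
    rw [map_mul, map_smul, map_mul] at hYZr
    obtain ⟨E1', E2', E3'⟩ := extract hq hq' q⁻¹
      (fun j => coordL hq hq' (Sum.inl j) (φ (Y n q i)))
      (fun j => coordL hq hq' (Sum.inr (Sum.inl j)) (φ (Y n q i)))
      (fun j => coordL hq hq' (Sum.inr (Sum.inr j)) (φ (Y n q i)))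
      (fun k => coordL hq hq' (Sum.inr (Sum.inr k)) (φ (Z n q i)))
      (by rw [← repr3 hq hq' hyspan, ← hw]; exact hYZr)
    obtain ⟨offaV, offbV, diagaV, -⟩ := scalarCons hq hq' q⁻¹ hp1 _ _ _ E1' E2'
    have aallV : ∀ j k, coordL hq hq' (Sum.inl j) (φ (Y n q i)) *
        coordL hq hq' (Sum.inr (Sum.inr k)) (φ (Z n q i)) = 0 := by
      intro j k
      rcases eq_or_ne j k with rfl | hjk
      · exact (mul_eq_zero.1 (diagaV j)).resolve_right hdiag_ne
      · exact offaV j k hjk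
    -- Z i and its image are nonzero
    have hZne : Z n q i ≠ (0 : H n q) := by
      intro h
      have h1 := coordL_gen hq hq' (Sum.inr (Sum.inr i)) (Sum.inr (Sum.inr i))
      rw [if_pos rfl, gen_eq_Z, h, map_zero] at h1
      exact one_ne_zero h1.symm
    have hXne : X n q i ≠ (0 : H n q) := by
      intro h
      have h1 := coordL_gen hq hq' (Sum.inl i) (Sum.inl i)
      rw [if_pos rfl, gen_eq_X, h, map_zero] at h1
      exact one_ne_zero h1.symm
    have hYne : Y n q i ≠ (0 : H n q) := by
      intro h
      have h1 := coordL_gen hq hq' (Sum.inr (Sum.inl i)) (Sum.inr (Sum.inl i))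
      rw [if_pos rfl, gen_eq_Y, h, map_zero] at h1
      exact one_ne_zero h1.symm
    have hwne : φ (Z n q i) ≠ 0 := by
      intro h
      apply hZne
      have := congrArg φ.symm h
      rwa [AlgEquiv.symm_apply_apply, map_zero] at this
    have hex : ∃ k, coordL hq hq' (Sum.inr (Sum.inr k)) (φ (Z n q i)) ≠ 0 := by
      by_contra hc
      push_neg at hc
      apply hwne
      rw [hw]
      exact Finset.sum_eq_zero fun k _ => by rw [hc k, zero_smul]
    have hXnotZ : φ (X n q i) ∉ Zsub n q := by
      intro hmemz
      have hXin : X n q i ∈ Zsub n q := by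
        have := hZsubmap _ hmemz
        rwa [AlgEquiv.symm_apply_apply] at this
      have h3 := coordL_xy_of_Zsub hq hq' hXin (Sum.inl i)
        (fun k => by simp)
      have h4 := coordL_gen hq hq' (Sum.inl i) (Sum.inl i)
      rw [if_pos rfl, gen_eq_X] at h4
      rw [h3] at h4
      exact one_ne_zero h4.symm
    have huniq : ∀ k1 k2, coordL hq hq' (Sum.inr (Sum.inr k1)) (φ (Z n q i)) ≠ 0 →
        coordL hq hq' (Sum.inr (Sum.inr k2)) (φ (Z n q i)) ≠ 0 → k1 = k2 := by
      intro k1 k2 hk1 hk2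
      by_contra hne
      apply hXnotZ
      apply mem_Zsub_of_coords hq hq' hxspan
      · intro j
        rcases eq_or_ne j k2 with rfl | hj
        · exact (mul_eq_zero.1 (offaU j k1 (fun hc => hne hc.symm))).resolve_right hk1
        · exact (mul_eq_zero.1 (offaU j k2 hj)).resolve_right hk2
      · intro j
        exact (mul_eq_zero.1 (ballU j k1)).resolve_right hk1
    obtain ⟨t, ht⟩ := hex
    have hzero : ∀ k, k ≠ t → coordL hq hq' (Sum.inr (Sum.inr k)) (φ (Z n q i)) = 0 :=
      fun k hk => by_contra fun h => hk (huniq k t h ht)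
    have haU : ∀ j, j ≠ t → coordL hq hq' (Sum.inl j) (φ (X n q i)) = 0 :=
      fun j hj => (mul_eq_zero.1 (offaU j t hj)).resolve_right ht
    have hbU : ∀ j, coordL hq hq' (Sum.inr (Sum.inl j)) (φ (X n q i)) = 0 :=
      fun j => (mul_eq_zero.1 (ballU j t)).resolve_right ht
    have hcU : ∀ j, coordL hq hq' (Sum.inr (Sum.inr j)) (φ (X n q i)) = 0 :=
      c_vanish hq hq' q hq1 _ _ t hzero ht E3
    have hbV : ∀ j, j ≠ t → coordL hq hq' (Sum.inr (Sum.inl j)) (φ (Y n q i)) = 0 :=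
      fun j hj => (mul_eq_zero.1 (offbV j t hj)).resolve_right ht
    have haV : ∀ j, coordL hq hq' (Sum.inl j) (φ (Y n q i)) = 0 :=
      fun j => (mul_eq_zero.1 (aallV j t)).resolve_right ht
    have hcV : ∀ j, coordL hq hq' (Sum.inr (Sum.inr j)) (φ (Y n q i)) = 0 :=
      c_vanish hq hq' q⁻¹ hp1 _ _ t hzero ht E3'
    have hu : φ (X n q i) = coordL hq hq' (Sum.inl t) (φ (X n q i)) • X n q t := by
      conv_lhs => rw [repr3 hq hq' hxspan]
      rw [Finset.sum_eq_single_of_mem t (Finset.mem_univ t) (fun j _ hj => by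
        rw [haU j hj, hbU j, hcU j, zero_smul, zero_smul, zero_smul, add_zero, add_zero])]
      rw [hbU t, hcU t, zero_smul, zero_smul, add_zero, add_zero]
    have hv : φ (Y n q i) = coordL hq hq' (Sum.inr (Sum.inl t)) (φ (Y n q i)) • Y n q t := by
      conv_lhs => rw [repr3 hq hq' hyspan]
      rw [Finset.sum_eq_single_of_mem t (Finset.mem_univ t) (fun j _ hj => by
        rw [haV j, hbV j hj, hcV j, zero_smul, zero_smul, zero_smul, add_zero, add_zero])]
      rw [haV t, hcV t, zero_smul, zero_smul, add_zero, zero_add]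
    have hune : coordL hq hq' (Sum.inl t) (φ (X n q i)) ≠ 0 := by
      intro h0
      apply hXne
      apply φ.injective
      rw [hu, h0, zero_smul, map_zero]
    have hvne : coordL hq hq' (Sum.inr (Sum.inl t)) (φ (Y n q i)) ≠ 0 := by
      intro h0
      apply hYne
      apply φ.injective
      rw [hv, h0, zero_smul, map_zero]
    -- the xy relation determines the z-coefficient
    have hXYr := congrArg φ (HXY (n := n) (q := q) i)
    rw [map_mul, map_add, map_smul, map_mul] at hXYr
    rw [hu, hv] at hXYr
    rw [smulmul, smulmul, HXY t, smul_add, smul_smul, smul_smul] at hXYr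
    rw [show coordL hq hq' (Sum.inl t) (φ (X n q i)) *
        coordL hq hq' (Sum.inr (Sum.inl t)) (φ (Y n q i)) * q⁻¹ =
        q⁻¹ * (coordL hq hq' (Sum.inr (Sum.inl t)) (φ (Y n q i)) *
        coordL hq hq' (Sum.inl t) (φ (X n q i))) from by ring] at hXYr
    have hz' := (add_left_cancel hXYr).symm
    exact ⟨_, _, t, hune, hvne, hu, hv, hz'⟩
  choose sa sb t hsa hsb hx hy hz using main
  have htinj : Function.Injective t := by
    intro i i' he
    by_contra hne
    have h1 : Z n q i = (sa i * sb i) • φ.symm (Z n q (t i)) := by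
      have := congrArg φ.symm (hz i)
      rwa [AlgEquiv.symm_apply_apply, map_smul] at this
    have h2 : Z n q i' = (sa i' * sb i') • φ.symm (Z n q (t i)) := by
      have := congrArg φ.symm (hz i')
      rw [AlgEquiv.symm_apply_apply, map_smul] at this
      rwa [← he] at this
    have h3 : (sa i' * sb i') • Z n q i = (sa i * sb i) • Z n q i' := by
      rw [h1, h2, smul_smul, smul_smul, mul_comm]
    have h4 := congrArg (coordL hq hq' (Sum.inr (Sum.inr i))) h3
    rw [map_smul, map_smul, smul_eq_mul, smul_eq_mul] at h4
    have c1 := coordL_gen hq hq' (Sum.inr (Sum.inr i)) (Sum.inr (Sum.inr i))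
    rw [if_pos rfl, gen_eq_Z] at c1
    have c2 := coordL_gen hq hq' (Sum.inr (Sum.inr i)) (Sum.inr (Sum.inr i'))
    rw [if_neg (by simp [Ne.symm hne]), gen_eq_Z] at c2
    rw [c1, c2, mul_one, mul_zero] at h4
    exact mul_ne_zero (hsa i') (hsb i') h4
  have hbij : Function.Bijective t := Finite.injective_iff_bijective.1 htinj
  refine ⟨fun j => Units.mk0 (sa ((Equiv.ofBijective t hbij).symm j)) (hsa _),
    fun j => Units.mk0 (sb ((Equiv.ofBijective t hbij).symm j)) (hsb _),
    Equiv.ofBijective t hbij, ?_⟩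
  have hAlg : φ.toAlgHom = (bldE q
      (fun j => Units.mk0 (sa ((Equiv.ofBijective t hbij).symm j)) (hsa _))
      (fun j => Units.mk0 (sb ((Equiv.ofBijective t hbij).symm j)) (hsb _))
      (Equiv.ofBijective t hbij)).toAlgHom := by
    apply algHom_ext
    have happ : ∀ i, (Equiv.ofBijective t hbij) i = t i := fun i => rfl
    have hsymmt : ∀ i, (Equiv.ofBijective t hbij).symm (t i) = i := fun i => by
      rw [← happ i, Equiv.symm_apply_apply]
    rintro (i | i | i)
    · show φ (X n q i) = bldE q _ _ _ (X n q i)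
      rw [hx i, bldE_X]
      simp only [Units.val_mk0, Equiv.symm_apply_apply, happ, hsymmt]
    · show φ (Y n q i) = bldE q _ _ _ (Y n q i)
      rw [hy i, bldE_Y]
      simp only [Units.val_mk0, Equiv.symm_apply_apply, happ, hsymmt]
    · show φ (Z n q i) = bldE q _ _ _ (Z n q i)
      rw [hz i, bldE_Z]
      simp only [Units.val_mk0, Equiv.symm_apply_apply, happ, hsymmt]
  exact AlgEquiv.ext fun x => AlgHom.congr_fun hAlg x

end Classify
section Assemble

variable {n : ℕ} {q : ℂ}

lemma bldE_mul_apply (A B A' B' : Fin n → ℂˣ) (π π' : Equiv.Perm (Fin n)) (x : H n q) :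
    bldE q (fun j => A j * A' (π.symm j)) (fun j => B j * B' (π.symm j)) (π * π') x =
      bldE q A B π (bldE q A' B' π' x) := by
  have h := AlgHom.congr_fun (bld_comp (q := q) (fun j => (A j : ℂ)) (fun j => (B j : ℂ))
    (fun j => (A' j : ℂ)) (fun j => (B' j : ℂ)) π π') x
  rw [AlgHom.comp_apply] at h
  exact h.symm

/-- The homomorphism from the semidirect product into the graded automorphisms. -/
def psi (n : ℕ) (q : ℂ) :
    SemidirectProduct ((Fin n → ℂˣ) × (Fin n → ℂˣ)) (Equiv.Perm (Fin n)) (permAction n) →*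
      (gradedAut n q) where
  toFun g := ⟨bldE q g.left.1 g.left.2 g.right, bldE_mem _ _ _⟩
  map_one' := by
    apply Subtype.ext
    apply AlgEquiv.ext
    intro x
    exact AlgHom.congr_fun (bld_id (n := n) (q := q)) x
  map_mul' g g' := by
    apply Subtype.ext
    apply AlgEquiv.ext
    intro x
    exact bldE_mul_apply g.left.1 g.left.2 g'.left.1 g'.left.2 g.right g'.right x

lemma smul_X_eq (hq : q ≠ 0) (hq' : NotRootOfUnity q) {c c' : ℂ} {k k' : Fin n}
    (hc : c ≠ 0) (h : c • X n q k = c' • X n q k') : k = k' ∧ c = c' := by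
  have h1 := congrArg (coordL hq hq' (Sum.inl k)) h
  rw [map_smul, map_smul, smul_eq_mul, smul_eq_mul] at h1
  have c1 := coordL_gen hq hq' (Sum.inl k) (Sum.inl k)
  rw [if_pos rfl, gen_eq_X] at c1
  rcases eq_or_ne k' k with rfl | hne
  · refine ⟨rfl, ?_⟩
    rw [c1, mul_one, mul_one] at h1
    exact h1
  · exfalso
    have c2 := coordL_gen hq hq' (Sum.inl k) (Sum.inl k')
    rw [if_neg (by simp [hne]), gen_eq_X] at c2
    rw [c1, c2, mul_one, mul_zero] at h1
    exact hc h1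
lemma smul_Y_eq (hq : q ≠ 0) (hq' : NotRootOfUnity q) {c c' : ℂ} {k k' : Fin n}
    (hc : c ≠ 0) (h : c • Y n q k = c' • Y n q k') : k = k' ∧ c = c' := by
  have h1 := congrArg (coordL hq hq' (Sum.inr (Sum.inl k))) h
  rw [map_smul, map_smul, smul_eq_mul, smul_eq_mul] at h1
  have c1 := coordL_gen hq hq' (Sum.inr (Sum.inl k)) (Sum.inr (Sum.inl k))
  rw [if_pos rfl, gen_eq_Y] at c1
  rcases eq_or_ne k' k with rfl | hne
  · refine ⟨rfl, ?_⟩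
    rw [c1, mul_one, mul_one] at h1
    exact h1
  · exfalso
    have c2 := coordL_gen hq hq' (Sum.inr (Sum.inl k)) (Sum.inr (Sum.inl k'))
    rw [if_neg (by simp [hne]), gen_eq_Y] at c2
    rw [c1, c2, mul_one, mul_zero] at h1
    exact hc h1

lemma psi_bijective (hq : q ≠ 0) (hq' : NotRootOfUnity q) :
    Function.Bijective (psi n q) := by
  constructor
  · intro g g' hgg
    have hval : bldE q g.left.1 g.left.2 g.right = bldE q g'.left.1 g'.left.2 g'.right :=
      Subtype.ext_iff.1 hgg
    have hXa : ∀ i, ((g.left.1 (g.right i) : ℂˣ) : ℂ) • X n q (g.right i) =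
        ((g'.left.1 (g'.right i) : ℂˣ) : ℂ) • X n q (g'.right i) := by
      intro i
      have := congrArg (fun e : H n q ≃ₐ[ℂ] H n q => e (X n q i)) hval
      simpa only [bldE_X] using this
    have hYb : ∀ i, ((g.left.2 (g.right i) : ℂˣ) : ℂ) • Y n q (g.right i) =
        ((g'.left.2 (g'.right i) : ℂˣ) : ℂ) • Y n q (g'.right i) := by
      intro i
      have := congrArg (fun e : H n q ≃ₐ[ℂ] H n q => e (Y n q i)) hval
      simpa only [bldE_Y] using this
    have hperm : ∀ i, g.right i = g'.right i :=
      fun i => (smul_X_eq hq hq' (Units.ne_zero _) (hXa i)).1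
    have hre : g.right = g'.right := Equiv.ext hperm
    have hA : g.left.1 = g'.left.1 := by
      funext j
      have h1 := (smul_X_eq hq hq' (Units.ne_zero _) (hXa (g.right.symm j))).2
      rw [Equiv.apply_symm_apply] at h1
      have h2 : g'.right (g.right.symm j) = j := by
        rw [← hperm (g.right.symm j), Equiv.apply_symm_apply]
      rw [h2] at h1
      exact Units.ext h1
    have hB : g.left.2 = g'.left.2 := by
      funext j
      have h1 := (smul_Y_eq hq hq' (Units.ne_zero _) (hYb (g.right.symm j))).2
      rw [Equiv.apply_symm_apply] at h1
      have h2 : g'.right (g.right.symm j) = j := by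
        rw [← hperm (g.right.symm j), Equiv.apply_symm_apply]
      rw [h2] at h1
      exact Units.ext h1
    cases g with
    | mk gl gr =>
      cases g' with
      | mk gl' gr' =>
        cases gl; cases gl'
        simp only at hA hB hre
        simp [hA, hB, hre]
  · rintro ⟨φ, hφ⟩
    obtain ⟨A, B, π, rfl⟩ := classify hq hq' φ hφ
    exact ⟨⟨(A, B), π⟩, Subtype.ext rfl⟩

end Assemble

/-- For `n ≥ 1` and `q` nonzero and not a root of unity, the group of
graded automorphisms of `𝔥_n(q)` is isomorphic to the semidirect product
`((Fin n → ℂˣ) × (Fin n → ℂˣ)) ⋊ Equiv.Perm (Fin n)`. -/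
theorem gradedAut_iso_semidirectProduct (n : ℕ) (hn : 1 ≤ n) (q : ℂ) (hq : q ≠ 0)
    (hq' : NotRootOfUnity q) :
    Nonempty ((gradedAut n q) ≃*
      SemidirectProduct ((Fin n → ℂˣ) × (Fin n → ℂˣ)) (Equiv.Perm (Fin n))
        (permAction n)) := by
  exact ⟨(MulEquiv.ofBijective (psi n q) (psi_bijective hq hq')).symm⟩

end QHeisenberg
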